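/- Lemma 6 (bound on the squared saddle subdifferential norm at the full-dimensional update, stated deterministically; case θ = 1). Let σ, τ > 0. Let w^{k−1}, w^k, w^{k+1} ∈ E and δ^{k−1}, δ^k, δ̂^{k+1} ∈ F satisfy: q^k = ∇_w φ(w^{k−1}, δ^{k−1}) − (n−1)(∇_w φ(w^k, δ^k) − ∇_w φ(w^k, δ^{k−1})); there is γ_f^{k+1} ∈ ∂f(w^{k+1}) with 0 = γ_f^{k+1} + σ^{−1}(w^{k+1} − w^k) + 2∇_w φ(w^k, δ^k) − q^k; and there is γ̂_g^{k+1} ∈ ∂g(δ̂^{k+1}) with 0 = γ̂_g^{k+1} + τ^{−1}(δ̂^{k+1} − δ^k) − ∇_δ φ(w^{k+1}, δ̂^{k+1}). Then ‖γ_f^{k+1} + ∇_w φ(w^{k+1}, δ̂^{k+1})‖² + ‖γ̂_g^{k+1} − ∇_δ φ(w^{k+1}, δ̂^{k+1})‖² ≤ (3σ^{−2} + 6L11²)‖w^{k+1} − w^k‖² + 6L11²‖w^k − w^{k−1}‖² + (τ^{−2} + 6nL12²)‖δ̂^{k+1} − δ^k‖² + 6n²L12²‖δ^k − δ^{k−1}‖².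 -/

import Mathlib

open scoped RealInnerProductSpace

/-- `γ` is a subgradient of `h` at `x`. -/
def IsSubgradient {X : Type*} [NormedAddCommGroup X] [InnerProductSpace ℝ X]
    (h : X → ℝ) (x γ : X) : Prop :=
  ∀ u, h u ≥ h x + ⟪γ, u - x⟫

set_option maxHeartbeats 1000000 in
/-- Lemma 6: bound on the squared saddle subdifferential norm at the full-dimensional
update, stated deterministically, in the case θ = 1. -/
theorem saddle_subdifferential_norm_bound_full_update
    {n : ℕ} (hn : 1 ≤ n)
    {E : Type*} [NormedAddCommGroup E] [InnerProductSpace ℝ E] [FiniteDimensional ℝ E]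
    {Fd : Fin n → Type*} [∀ i, NormedAddCommGroup (Fd i)]
    [∀ i, InnerProductSpace ℝ (Fd i)] [∀ i, FiniteDimensional ℝ (Fd i)]
    (φ : ∀ i, E → Fd i → ℝ)
    (gw : ∀ i, E → Fd i → E) (gd : ∀ i, E → Fd i → Fd i)
    (hgw : ∀ (i : Fin n) (w : E) (d : Fd i),
      HasGradientAt (fun w' => φ i w' d) (gw i w d) w)
    (hgd : ∀ (i : Fin n) (w : E) (d : Fd i),
      HasGradientAt (fun d' => φ i w d') (gd i w d) d)
    (Gw : E → PiLp 2 Fd → E)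
    (hGw : ∀ w δ, Gw w δ = ∑ i, gw i w (δ i))
    (Gd : E → PiLp 2 Fd → PiLp 2 Fd)
    (hGd : ∀ w δ i, Gd w δ i = gd i w (δ i))
    (L11 L12 : ℝ) (hL11 : 0 < L11) (hL12 : 0 < L12)
    (hLw : ∀ (w w' : E) (δ : PiLp 2 Fd), ‖Gw w δ - Gw w' δ‖ ≤ L11 * ‖w - w'‖)
    (hLwd : ∀ (w : E) (δ δ' : PiLp 2 Fd), ‖Gw w δ - Gw w δ'‖ ≤ L12 * ‖δ - δ'‖)
    (f : E → ℝ) (hf : ConvexOn ℝ Set.univ f)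
    (gi : ∀ i, Fd i → ℝ) (hgi : ∀ i, ConvexOn ℝ Set.univ (gi i))
    (σ τ : ℝ) (hσ : 0 < σ) (hτ : 0 < τ)
    (wkm1 wk wk1 : E) (δkm1 δk δhat : PiLp 2 Fd)
    (qk : E)
    (hq : qk = Gw wkm1 δkm1 - ((n : ℝ) - 1) • (Gw wk δk - Gw wk δkm1))
    (γf : E) (hsubf : IsSubgradient f wk1 γf)
    (hupw : (0 : E) = γf + σ⁻¹ • (wk1 - wk) + (2 : ℝ) • Gw wk δk - qk)
    (γghat : PiLp 2 Fd) (hsubg : ∀ i, IsSubgradient (gi i) (δhat i) (γghat i))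
    (hupd : (0 : PiLp 2 Fd) = γghat + τ⁻¹ • (δhat - δk) - Gd wk1 δhat) :
    ‖γf + Gw wk1 δhat‖ ^ 2 + ‖γghat - Gd wk1 δhat‖ ^ 2 ≤
      (3 * (σ⁻¹) ^ 2 + 6 * L11 ^ 2) * ‖wk1 - wk‖ ^ 2
        + 6 * L11 ^ 2 * ‖wk - wkm1‖ ^ 2
        + ((τ⁻¹) ^ 2 + 6 * (n : ℝ) * L12 ^ 2) * ‖δhat - δk‖ ^ 2
        + 6 * (n : ℝ) ^ 2 * L12 ^ 2 * ‖δk - δkm1‖ ^ 2 := by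

  -- Part 2: the δ-part is exactly (τ⁻¹)² ‖δhat - δk‖²
  have hδeq : γghat - Gd wk1 δhat = -(τ⁻¹ • (δhat - δk)) := by
    have h := hupd.symm
    rw [sub_eq_zero] at h
    rw [← h]; abel
  have hδ : ‖γghat - Gd wk1 δhat‖ ^ 2 = (τ⁻¹) ^ 2 * ‖δhat - δk‖ ^ 2 := by
    rw [hδeq, norm_neg, norm_smul, Real.norm_eq_abs, abs_of_pos (by positivity : (0:ℝ) < τ⁻¹)]
    ring
  -- Part 1: decompose γf + Gw wk1 δhat
  have hγ : γf = qk - σ⁻¹ • (wk1 - wk) - (2 : ℝ) • Gw wk δk := by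
    have h := hupw.symm
    rw [sub_eq_zero] at h
    rw [← h]; abel
  have key : γf + Gw wk1 δhat =
      -(σ⁻¹ • (wk1 - wk))
        + ((Gw wk1 δhat - Gw wk δhat) + (Gw wkm1 δkm1 - Gw wk δkm1))
        + ((Gw wk δhat - Gw wk δk) + (n : ℝ) • (Gw wk δkm1 - Gw wk δk)) := by
    rw [hγ, hq]; module
  set a := ‖wk1 - wk‖ with ha
  set b := ‖wk - wkm1‖ with hb
  set c := ‖δhat - δk‖ with hc
  set e := ‖δk - δkm1‖ with he
  have ha0 : 0 ≤ a := norm_nonneg _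
  have hb0 : 0 ≤ b := norm_nonneg _
  have hc0 : 0 ≤ c := norm_nonneg _
  have he0 : 0 ≤ e := norm_nonneg _
  have hv1 : ‖-(σ⁻¹ • (wk1 - wk))‖ = σ⁻¹ * a := by
    rw [norm_neg, norm_smul, Real.norm_eq_abs, abs_of_pos (by positivity : (0:ℝ) < σ⁻¹)]
  have hv2 : ‖(Gw wk1 δhat - Gw wk δhat) + (Gw wkm1 δkm1 - Gw wk δkm1)‖
      ≤ L11 * a + L11 * b := by
    refine (norm_add_le _ _).trans (add_le_add (hLw _ _ _) ?_)
    calc ‖Gw wkm1 δkm1 - Gw wk δkm1‖ ≤ L11 * ‖wkm1 - wk‖ := hLw _ _ _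
      _ = L11 * b := by rw [norm_sub_rev]
  have hv3 : ‖(Gw wk δhat - Gw wk δk) + (n : ℝ) • (Gw wk δkm1 - Gw wk δk)‖
      ≤ L12 * c + (n : ℝ) * (L12 * e) := by
    refine (norm_add_le _ _).trans (add_le_add (hLwd _ _ _) ?_)
    rw [norm_smul, Real.norm_eq_abs, abs_of_nonneg (by positivity : (0:ℝ) ≤ (n:ℝ))]
    refine mul_le_mul_of_nonneg_left ?_ (by positivity)
    calc ‖Gw wk δkm1 - Gw wk δk‖ ≤ L12 * ‖δkm1 - δk‖ := hLwd _ _ _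
      _ = L12 * e := by rw [norm_sub_rev]
  have hbound : ‖γf + Gw wk1 δhat‖
      ≤ σ⁻¹ * a + (L11 * a + L11 * b) + (L12 * c + (n : ℝ) * (L12 * e)) := by
    rw [key]
    refine (norm_add₃_le).trans ?_
    rw [hv1]
    exact add_le_add (add_le_add_right hv2 _) hv3
  have hsq : ‖γf + Gw wk1 δhat‖ ^ 2
      ≤ (σ⁻¹ * a + (L11 * a + L11 * b) + (L12 * c + (n : ℝ) * (L12 * e))) ^ 2 := by
    have h0 : (0:ℝ) ≤ ‖γf + Gw wk1 δhat‖ := norm_nonneg _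
    nlinarith [hbound, h0]
  have hn' : (1 : ℝ) ≤ (n : ℝ) := by exact_mod_cast hn
  rw [hδ]
  nlinarith [hsq, sq_nonneg (σ⁻¹ * a - (L11 * a + L11 * b)),
    sq_nonneg (σ⁻¹ * a - (L12 * c + (n : ℝ) * (L12 * e))),
    sq_nonneg ((L11 * a + L11 * b) - (L12 * c + (n : ℝ) * (L12 * e))),
    sq_nonneg (L11 * a - L11 * b), sq_nonneg (L12 * c - (n : ℝ) * (L12 * e)),
    mul_nonneg (mul_nonneg hc0 hc0) (sub_nonneg.mpr hn'), sq_nonneg (L12 * c),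
    mul_pos hL12 hL12, sq_nonneg c]
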